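/- Let F ⊆ A. If F is a SAGBI basis for A, then A = R[F], i.e., F generates A as an R-subalgebra of R[x_1,…,x_n]. -/

import Mathlib

open MvPolynomial

/-- A term order on the monomials (exponent vectors) of a polynomial ring in `n`
variables: a well-founded linear order compatible with multiplication of power
products (i.e. with addition of exponent vectors). -/
structure TermOrder (n : ℕ) where
  lo : LinearOrder (Fin n →₀ ℕ)
  wf : WellFounded lo.lt
  add_le_add : ∀ a b c : Fin n →₀ ℕ, lo.le a b → lo.le (a + c) (b + c)

namespace TermOrder

variable {n : ℕ} {R : Type*} [CommRing R]

/-- `lp p`: the leading power product (exponent vector) of `p`; junk value `0`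
for the zero polynomial. -/
noncomputable def lp (ord : TermOrder n) (p : MvPolynomial (Fin n) R) : Fin n →₀ ℕ :=
  (@Finset.max _ ord.lo p.support).unbotD 0

/-- `lc p`: the leading coefficient of `p` (0 if `p = 0`). -/
noncomputable def lc (ord : TermOrder n) (p : MvPolynomial (Fin n) R) : R :=
  p.coeff (ord.lp p)

/-- `ltm p`: the leading term `lc(p)·lp(p)` of `p` (0 if `p = 0`). -/
noncomputable def ltm (ord : TermOrder n) (p : MvPolynomial (Fin n) R) : MvPolynomial (Fin n) R :=
  monomial (ord.lp p) (ord.lc p)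

end TermOrder

variable {n : ℕ} {R : Type*} [CommRing R]

/-- An `F`-power product: a finite product `∏ fᵢ^{eᵢ}` with `fᵢ ∈ F`. -/
def IsPowerProduct (F : Set (MvPolynomial (Fin n) R)) (q : MvPolynomial (Fin n) R) : Prop :=
  ∃ e : MvPolynomial (Fin n) R →₀ ℕ, (e.support : Set (MvPolynomial (Fin n) R)) ⊆ F ∧
    q = e.prod (fun f k => f ^ k)

/-- `F` is a SAGBI basis for the `R`-subalgebra `A`: `R[Lt A] = R[Lt F]`. -/
def IsSAGBI (ord : TermOrder n) (A : Subalgebra R (MvPolynomial (Fin n) R))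
    (F : Set (MvPolynomial (Fin n) R)) : Prop :=
  Algebra.adjoin R (ord.ltm '' (A : Set (MvPolynomial (Fin n) R))) =
    Algebra.adjoin R (ord.ltm '' F)

/-- One step of s-reduction of `g` to `h` via `F`. -/
def SStep (ord : TermOrder n) (F : Set (MvPolynomial (Fin n) R))
    (g h : MvPolynomial (Fin n) R) : Prop :=
  ∃ (β : Fin n →₀ ℕ) (N : ℕ) (q : Fin N → MvPolynomial (Fin n) R) (r : Fin N → R),
    g.coeff β ≠ 0 ∧
    (∀ i, IsPowerProduct F (q i) ∧ q i ≠ 0 ∧ ord.lp (q i) = β) ∧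
    g.coeff β = ∑ i, r i * ord.lc (q i) ∧
    h = g - ∑ i, C (r i) * q i

/-- `g` s-reduces to `h` via `F`: a finite chain of one-step s-reductions. -/
def SReduce (ord : TermOrder n) (F : Set (MvPolynomial (Fin n) R)) :
    MvPolynomial (Fin n) R → MvPolynomial (Fin n) R → Prop :=
  Relation.ReflTransGen (SStep ord F)

/-- One step of si-reduction of `h` to `h'` via `G`, relative to the subalgebra `A`. -/
def SiStep (ord : TermOrder n) (A : Subalgebra R (MvPolynomial (Fin n) R))
    (G : Set (MvPolynomial (Fin n) R)) (h h' : MvPolynomial (Fin n) R) : Prop :=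
  ∃ (α : Fin n →₀ ℕ) (M : ℕ) (g a : Fin M → MvPolynomial (Fin n) R),
    h.coeff α ≠ 0 ∧
    (∀ i, g i ∈ G) ∧ (∀ i, a i ∈ A) ∧
    (∀ i, a i * g i ≠ 0 ∧ ord.lp (a i * g i) = α) ∧
    (monomial α (h.coeff α) : MvPolynomial (Fin n) R) = ∑ i, ord.ltm (a i * g i) ∧
    h' = h - ∑ i, a i * g i

/-- `h` si-reduces to `h'` via `G`: a finite chain of one-step si-reductions. -/
def SiReduce (ord : TermOrder n) (A : Subalgebra R (MvPolynomial (Fin n) R))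
    (G : Set (MvPolynomial (Fin n) R)) :
    MvPolynomial (Fin n) R → MvPolynomial (Fin n) R → Prop :=
  Relation.ReflTransGen (SiStep ord A G)

/-- The subalgebra `R[Lt A]` generated by the leading terms of elements of `A`. -/
noncomputable def LtAlg (ord : TermOrder n) (A : Subalgebra R (MvPolynomial (Fin n) R)) :
    Subalgebra R (MvPolynomial (Fin n) R) :=
  Algebra.adjoin R (ord.ltm '' (A : Set (MvPolynomial (Fin n) R)))

/-- The leading term of an element of `A`, as an element of `R[Lt A]`. -/
noncomputable def ltA (ord : TermOrder n) (A : Subalgebra R (MvPolynomial (Fin n) R))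
    (a : A) : LtAlg ord A :=
  ⟨ord.ltm (a : MvPolynomial (Fin n) R), Algebra.subset_adjoin ⟨a, a.2, rfl⟩⟩

/-- `G ⊆ I` is a SAGBI–Gröbner basis (SG-basis) for the ideal `I` of `A`:
`Lt G` generates the ideal `⟨Lt I⟩` in the subalgebra `R[Lt A]`. -/
def IsSGBasis (ord : TermOrder n) (A : Subalgebra R (MvPolynomial (Fin n) R))
    (I : Ideal A) (G : Set A) : Prop :=
  Ideal.span
      ((Subtype.val ⁻¹' (ord.ltm '' (Subtype.val '' G)) : Set (LtAlg ord A))) =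
  Ideal.span
      ((Subtype.val ⁻¹' (ord.ltm '' (Subtype.val '' (I : Set A))) : Set (LtAlg ord A)))

section SagbiAux
open MvPolynomial
variable {n : ℕ} {R : Type*} [CommRing R]

theorem TermOrder.le_lp (ord : TermOrder n) {p : MvPolynomial (Fin n) R} {m : Fin n →₀ ℕ}
    (hm : m ∈ p.support) : ord.lo.le m (ord.lp p) := by
  obtain ⟨b, hb⟩ := @Finset.max_of_mem _ ord.lo _ _ hm
  have hlp : ord.lp p = b := by simp [TermOrder.lp, hb]
  rw [hlp]
  exact @Finset.le_max_of_eq _ ord.lo _ _ _ hm hb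

theorem TermOrder.lp_mem (ord : TermOrder n) {p : MvPolynomial (Fin n) R}
    (hp : p ≠ 0) : ord.lp p ∈ p.support := by
  obtain ⟨b, hb⟩ := @Finset.max_of_nonempty _ ord.lo _ (MvPolynomial.support_nonempty.mpr hp)
  have hlp : ord.lp p = b := by simp [TermOrder.lp, hb]
  rw [hlp]
  exact @Finset.mem_of_max _ ord.lo _ _ hb

theorem TermOrder.lc_ne_zero (ord : TermOrder n) {p : MvPolynomial (Fin n) R}
    (hp : p ≠ 0) : ord.lc p ≠ 0 :=
  MvPolynomial.mem_support_iff.mp (ord.lp_mem hp)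

theorem TermOrder.lp_eq (ord : TermOrder n) {p : MvPolynomial (Fin n) R} {β : Fin n →₀ ℕ}
    (h1 : p.coeff β ≠ 0) (h2 : ∀ m ∈ p.support, ord.lo.le m β) : ord.lp p = β := by
  have hp : p ≠ 0 := fun h => h1 (by simp [h])
  exact ord.lo.le_antisymm _ _ (h2 _ (ord.lp_mem hp))
    (ord.le_lp (MvPolynomial.mem_support_iff.mpr h1))

theorem TermOrder.lp_monomial (ord : TermOrder n) {β : Fin n →₀ ℕ} {c : R} (hc : c ≠ 0) :
    ord.lp (monomial β c) = β := by
  classical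
  apply ord.lp_eq (by simpa [MvPolynomial.coeff_monomial] using hc)
  intro m hm
  have hmb : m = β := by simpa [MvPolynomial.support_monomial, hc] using hm
  rw [hmb]
  exact ord.lo.le_refl β

theorem TermOrder.lc_monomial (ord : TermOrder n) {β : Fin n →₀ ℕ} {c : R} (hc : c ≠ 0) :
    ord.lc (monomial β c) = c := by
  classical
  rw [TermOrder.lc, ord.lp_monomial hc]
  simp [MvPolynomial.coeff_monomial]

theorem TermOrder.ltm_zero (ord : TermOrder n) : ord.ltm (0 : MvPolynomial (Fin n) R) = 0 := by
  have h : ord.lc (0 : MvPolynomial (Fin n) R) = 0 := by simp [TermOrder.lc]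
  rw [TermOrder.ltm, h, map_zero]

theorem TermOrder.add_le_add' (ord : TermOrder n) {u a v b : Fin n →₀ ℕ}
    (h1 : ord.lo.le u a) (h2 : ord.lo.le v b) : ord.lo.le (u + v) (a + b) := by
  have s2 : ord.lo.le (a + v) (a + b) := by
    rw [add_comm a v, add_comm a b]
    exact ord.add_le_add v b a h2
  exact ord.lo.le_trans _ _ _ (ord.add_le_add u a v h1) s2

theorem TermOrder.le_lp_mul (ord : TermOrder n) (p q : MvPolynomial (Fin n) R)
    {m : Fin n →₀ ℕ} (hm : m ∈ (p * q).support) : ord.lo.le m (ord.lp p + ord.lp q) := by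
  classical
  rw [MvPolynomial.mem_support_iff, MvPolynomial.coeff_mul] at hm
  obtain ⟨⟨u, v⟩, huv, hne⟩ := Finset.exists_ne_zero_of_sum_ne_zero hm
  rw [Finset.HasAntidiagonal.mem_antidiagonal] at huv
  have hu : u ∈ p.support := MvPolynomial.mem_support_iff.mpr (left_ne_zero_of_mul hne)
  have hv : v ∈ q.support := MvPolynomial.mem_support_iff.mpr (right_ne_zero_of_mul hne)
  rw [← huv]
  exact ord.add_le_add' (ord.le_lp hu) (ord.le_lp hv)

theorem TermOrder.coeff_mul_lp (ord : TermOrder n) (p q : MvPolynomial (Fin n) R) :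
    (p * q).coeff (ord.lp p + ord.lp q) = ord.lc p * ord.lc q := by
  classical
  rw [MvPolynomial.coeff_mul]
  have h0 : ∀ b ∈ Finset.HasAntidiagonal.antidiagonal (ord.lp p + ord.lp q),
      b ≠ (ord.lp p, ord.lp q) → (p.coeff b.1) * (q.coeff b.2) = 0 := by
    rintro ⟨u, v⟩ huv hne
    rw [Finset.HasAntidiagonal.mem_antidiagonal] at huv
    by_contra h
    have hu : u ∈ p.support := MvPolynomial.mem_support_iff.mpr (left_ne_zero_of_mul h)
    have hv : v ∈ q.support := MvPolynomial.mem_support_iff.mpr (right_ne_zero_of_mul h)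
    have h1 : ord.lo.le u (ord.lp p) := ord.le_lp hu
    have h2 : ord.lo.le v (ord.lp q) := ord.le_lp hv
    have e1 : ord.lo.le (u + v) (ord.lp p + v) := ord.add_le_add u (ord.lp p) v h1
    have e2 : ord.lo.le (ord.lp p + v) (ord.lp p + ord.lp q) := by
      rw [add_comm (ord.lp p) v, add_comm (ord.lp p) (ord.lp q)]
      exact ord.add_le_add v (ord.lp q) (ord.lp p) h2
    have hvq : v = ord.lp q := by
      have h3 : ord.lp p + v = ord.lp p + ord.lp q :=
        ord.lo.le_antisymm _ _ e2 (huv ▸ e1)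
      exact add_left_cancel h3
    have hup : u = ord.lp p := by
      subst hvq
      exact add_right_cancel huv
    exact hne (by rw [hup, hvq])
  rw [Finset.sum_eq_single_of_mem (ord.lp p, ord.lp q)
    (Finset.HasAntidiagonal.mem_antidiagonal.mpr rfl) h0]
  rfl

theorem TermOrder.lp_mul [IsDomain R] (ord : TermOrder n) {p q : MvPolynomial (Fin n) R}
    (hp : p ≠ 0) (hq : q ≠ 0) : ord.lp (p * q) = ord.lp p + ord.lp q := by
  apply ord.lp_eq
  · rw [ord.coeff_mul_lp]
    exact mul_ne_zero (ord.lc_ne_zero hp) (ord.lc_ne_zero hq)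
  · intro m hm
    exact ord.le_lp_mul p q hm

theorem TermOrder.lc_mul [IsDomain R] (ord : TermOrder n) {p q : MvPolynomial (Fin n) R}
    (hp : p ≠ 0) (hq : q ≠ 0) : ord.lc (p * q) = ord.lc p * ord.lc q := by
  rw [TermOrder.lc, ord.lp_mul hp hq, ord.coeff_mul_lp]

theorem TermOrder.ltm_mul [IsDomain R] (ord : TermOrder n) (p q : MvPolynomial (Fin n) R) :
    ord.ltm (p * q) = ord.ltm p * ord.ltm q := by
  by_cases hp : p = 0
  · simp [hp, ord.ltm_zero]
  by_cases hq : q = 0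
  · simp [hq, ord.ltm_zero]
  rw [TermOrder.ltm, TermOrder.ltm, TermOrder.ltm, ord.lp_mul hp hq, ord.lc_mul hp hq,
    MvPolynomial.monomial_mul]

theorem TermOrder.ltm_one [Nontrivial R] (ord : TermOrder n) :
    ord.ltm (1 : MvPolynomial (Fin n) R) = 1 := by
  have h1 : (1 : MvPolynomial (Fin n) R) = monomial 0 (1 : R) := by
    rw [MvPolynomial.monomial_zero', MvPolynomial.C_1]
  rw [TermOrder.ltm, h1, ord.lp_monomial one_ne_zero, ord.lc_monomial one_ne_zero]

theorem isPowerProduct_mem {F : Set (MvPolynomial (Fin n) R)} {f : MvPolynomial (Fin n) R}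
    (hf : f ∈ F) : IsPowerProduct F f := by
  classical
  refine ⟨Finsupp.single f 1, ?_, ?_⟩
  · rw [Finsupp.support_single_ne_zero _ one_ne_zero]
    simpa using hf
  · simp [Finsupp.prod_single_index]

theorem isPowerProduct_one (F : Set (MvPolynomial (Fin n) R)) : IsPowerProduct F 1 :=
  ⟨0, by simp, by simp⟩

theorem isPowerProduct_mul {F : Set (MvPolynomial (Fin n) R)} {q q' : MvPolynomial (Fin n) R}
    (h : IsPowerProduct F q) (h' : IsPowerProduct F q') : IsPowerProduct F (q * q') := by
  classical
  obtain ⟨e, he, rfl⟩ := h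
  obtain ⟨e', he', rfl⟩ := h'
  refine ⟨e + e', ?_, ?_⟩
  · intro x hx
    rcases Finset.mem_union.mp (Finsupp.support_add hx) with h | h
    exacts [he h, he' h]
  · exact (Finsupp.prod_add_index' (fun a => pow_zero a) (fun a b₁ b₂ => pow_add a b₁ b₂)).symm

theorem isPowerProduct_mem_adjoin {F : Set (MvPolynomial (Fin n) R)}
    {q : MvPolynomial (Fin n) R} (h : IsPowerProduct F q) : q ∈ Algebra.adjoin R F := by
  obtain ⟨e, he, rfl⟩ := h
  exact Subalgebra.prod_mem _ fun f hf => pow_mem (Algebra.subset_adjoin (he hf)) _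

theorem closure_ltm [IsDomain R] (ord : TermOrder n) (F : Set (MvPolynomial (Fin n) R))
    {m : MvPolynomial (Fin n) R} (hm : m ∈ Submonoid.closure (ord.ltm '' F)) :
    ∃ q, IsPowerProduct F q ∧ m = ord.ltm q := by
  induction hm using Submonoid.closure_induction with
  | mem x hx =>
    obtain ⟨f, hf, rfl⟩ := hx
    exact ⟨f, isPowerProduct_mem hf, rfl⟩
  | one => exact ⟨1, isPowerProduct_one F, (ord.ltm_one).symm⟩
  | mul x y hx hy ihx ihy =>
    obtain ⟨q, hq, rfl⟩ := ihx
    obtain ⟨q', hq', rfl⟩ := ihy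
    exact ⟨q * q', isPowerProduct_mul hq hq', (ord.ltm_mul q q').symm⟩

end SagbiAux

/-- If `F ⊆ A` is a SAGBI basis for `A`, then `F` generates `A`
as an `R`-subalgebra, i.e. `A = R[F]`. -/
theorem sagbi_basis_generates {n : ℕ} {R : Type*} [CommRing R] [IsDomain R]
    [IsNoetherianRing R] (ord : TermOrder n)
    (A : Subalgebra R (MvPolynomial (Fin n) R)) (F : Set (MvPolynomial (Fin n) R))
    (hFA : F ⊆ (A : Set (MvPolynomial (Fin n) R))) (hF : IsSAGBI ord A F) :
    Algebra.adjoin R F = A := by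
  
  classical
  apply le_antisymm (Algebra.adjoin_le hFA)
  have main : ∀ β : Fin n →₀ ℕ, ∀ a : MvPolynomial (Fin n) R, a ∈ A → ord.lp a = β →
      a ∈ Algebra.adjoin R F := by
    refine fun β => ord.wf.induction
      (C := fun β => ∀ a : MvPolynomial (Fin n) R, a ∈ A → ord.lp a = β →
        a ∈ Algebra.adjoin R F) β ?_
    intro β IH a ha hlp
    by_cases ha0 : a = 0
    · rw [ha0]; exact zero_mem _
    have hlt : ord.ltm a ∈ Algebra.adjoin R (ord.ltm '' F) :=
      hF ▸ Algebra.subset_adjoin ⟨a, ha, rfl⟩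
    have h2 : ord.ltm a ∈ Submodule.span R
        ((Submonoid.closure (ord.ltm '' F) : Submonoid (MvPolynomial (Fin n) R)) :
          Set (MvPolynomial (Fin n) R)) := by
      rw [← Algebra.adjoin_eq_span]
      exact hlt
    obtain ⟨c, hcsub, hcsum⟩ := Submodule.mem_span_set.mp h2
    have key : ∀ m ∈ c.support, ∃ q, IsPowerProduct F q ∧ m = ord.ltm q :=
      fun m hm => closure_ltm ord F (hcsub hm)
    choose! qf hq1 hq2 using key
    set T : Finset (MvPolynomial (Fin n) R) :=
      c.support.filter (fun m => ord.lp (qf m) = ord.lp a ∧ qf m ≠ 0) with hT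
    set s : MvPolynomial (Fin n) R := ∑ m ∈ T, MvPolynomial.C (c m) * qf m with hs
    have hTsub : T ⊆ c.support := by rw [hT]; exact Finset.filter_subset _ _
    have hmemT : ∀ m, m ∈ T ↔ m ∈ c.support ∧ (ord.lp (qf m) = ord.lp a ∧ qf m ≠ 0) := by
      intro m; rw [hT]; exact Finset.mem_filter
    -- the key coefficient identity
    have hlc : (∑ m ∈ T, c m * (qf m).coeff (ord.lp a)) = ord.lc a := by
      rw [Finsupp.sum] at hcsum
      have h3 := congrArg (MvPolynomial.coeff (ord.lp a)) hcsum
      rw [MvPolynomial.coeff_sum] at h3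
      have h4 : MvPolynomial.coeff (ord.lp a) (ord.ltm a) = ord.lc a := by
        rw [TermOrder.ltm, MvPolynomial.coeff_monomial, if_pos rfl]
      rw [h4] at h3
      rw [← h3]
      refine Eq.trans ?_
        (Finset.sum_subset (f := fun m => MvPolynomial.coeff (ord.lp a) (c m • m)) hTsub ?_)
      · refine Finset.sum_congr rfl fun m hmT => ?_
        obtain ⟨hm, hq, hz⟩ := (hmemT m).mp hmT
        show c m * MvPolynomial.coeff (ord.lp a) (qf m)
          = MvPolynomial.coeff (ord.lp a) (c m • m)
        have hcm : MvPolynomial.coeff (ord.lp a) m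
            = MvPolynomial.coeff (ord.lp a) (qf m) := by
          conv_lhs => rw [hq2 m hm]
          rw [TermOrder.ltm, MvPolynomial.coeff_monomial, if_pos hq, TermOrder.lc, hq]
        rw [MvPolynomial.coeff_smul, smul_eq_mul, hcm]
      · intro m hm hmT
        show MvPolynomial.coeff (ord.lp a) (c m • m) = 0
        have hcm : MvPolynomial.coeff (ord.lp a) m = 0 := by
          conv_lhs => rw [hq2 m hm]
          by_cases hz : qf m = 0
          · rw [hz, ord.ltm_zero]; simp
          · have hq : ¬ (ord.lp (qf m) = ord.lp a) := fun h =>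
              hmT ((hmemT m).mpr ⟨hm, h, hz⟩)
            rw [TermOrder.ltm, MvPolynomial.coeff_monomial, if_neg hq]
        rw [MvPolynomial.coeff_smul, smul_eq_mul, hcm, mul_zero]
    have hcs : MvPolynomial.coeff (ord.lp a) s = ord.lc a := by
      rw [hs, MvPolynomial.coeff_sum, ← hlc]
      exact Finset.sum_congr rfl fun m hm => MvPolynomial.coeff_C_mul _ _ _
    have hsadj : s ∈ Algebra.adjoin R F := by
      rw [hs]
      refine Subalgebra.sum_mem _ fun m hm => ?_
      have hmT := (hmemT m).mp hm
      refine mul_mem ?_ (isPowerProduct_mem_adjoin (hq1 m hmT.1))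
      rw [← MvPolynomial.algebraMap_eq]
      exact Subalgebra.algebraMap_mem _ _
    have hsA : s ∈ A := Algebra.adjoin_le hFA hsadj
    by_cases has : a - s = 0
    · have heq : a = s := by rwa [sub_eq_zero] at has
      rw [heq]; exact hsadj
    have hsupnot : ord.lp a ∉ (a - s).support := by
      rw [MvPolynomial.mem_support_iff]
      intro hne
      apply hne
      rw [MvPolynomial.coeff_sub, hcs]
      exact sub_self _
    have hbound : ∀ m ∈ (a - s).support, ord.lo.le m (ord.lp a) := by
      intro m hm
      rw [MvPolynomial.mem_support_iff, MvPolynomial.coeff_sub] at hm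
      by_cases hma : MvPolynomial.coeff m a = 0
      · have hms : MvPolynomial.coeff m s ≠ 0 := by
          intro h
          apply hm
          rw [hma, h, sub_zero]
        rw [hs, MvPolynomial.coeff_sum] at hms
        obtain ⟨k, hkT, hk⟩ := Finset.exists_ne_zero_of_sum_ne_zero hms
        rw [MvPolynomial.coeff_C_mul] at hk
        have hk2 : (qf k).coeff m ≠ 0 := right_ne_zero_of_mul hk
        have hkf := ((hmemT k).mp hkT).2.1
        have hle := ord.le_lp (MvPolynomial.mem_support_iff.mpr hk2)
        rwa [hkf] at hle
      · exact ord.le_lp (MvPolynomial.mem_support_iff.mpr hma)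
    have hlpalt : ord.lo.lt (ord.lp (a - s)) (ord.lp a) := by
      have hmem := ord.lp_mem has
      have hle := hbound _ hmem
      have hne : ord.lp (a - s) ≠ ord.lp a := fun h => hsupnot (h ▸ hmem)
      exact (ord.lo.lt_iff_le_not_ge _ _).mpr
        ⟨hle, fun h => hne (ord.lo.le_antisymm _ _ hle h)⟩
    have hasA : a - s ∈ A := A.sub_mem ha hsA
    have hadj : a - s ∈ Algebra.adjoin R F := IH _ (hlp ▸ hlpalt) (a - s) hasA rfl
    have heq : a = (a - s) + s := by ring
    rw [heq]
    exact add_mem hadj hsadj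
  exact fun a ha => main _ a ha rfl
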